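/- arXiv:2312.12326 — 2 statements merged into one kernel-verified Lean document; each statement's English description precedes it below -/
import Mathlib

section
/- In the layered DLA process with layer sizes N_1, …, N_k coupled with its upper-blocked process, the following hold: (i) for all i and t, B_i(t) ⊆ B̂_i(t), and hence L_i(t) ≤ L̂_i(t) and L̂_k(t) = t; (ii) on the event that L̂_j(t) < N_j for every j, the conditional expectation satisfies E(L̂_i(t+1) | Ĥ(t)) = L̂_i(t) + L̂_{i+1}(t)/N_{i+1} for every 0 ≤ i ≤ k, where L̂_{k+1}(t) = 1 and N_{k+1} = 1. -/
open Finset Filter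
open scoped Classical

namespace LayeredDLA

/-- The vertices of the layered graph: a source `v` (level `0`), a sink `z`
(level `k+1`), and `N i` vertices in layer `i+1` for each `i : Fin k`. -/
inductive Vertex (k : ℕ) (N : Fin k → ℕ) : Type where
  | source : Vertex k N
  | sink : Vertex k N
  | mid (i : Fin k) (x : Fin (N i)) : Vertex k N

/-- A particle's random walk is determined by its choice of one vertex in each layer. -/
abbrev Particle (k : ℕ) (N : Fin k → ℕ) : Type := ∀ i : Fin k, Fin (N i)

/-- The vertex at level `j` (for `0 ≤ j ≤ k+1`) on the walk of a particle `u`. -/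
def walkVertex {k : ℕ} {N : Fin k → ℕ} (u : Particle k N) (j : ℕ) : Vertex k N :=
  if h : 1 ≤ j ∧ j ≤ k then Vertex.mid ⟨j - 1, by omega⟩ (u ⟨j - 1, by omega⟩)
  else if j = 0 then Vertex.source else Vertex.sink

/-- The level at which a particle `u` halts, given the current cluster `C`:
the least `i` such that the walk vertex at level `i+1` is occupied.
(Since the sink is always in the cluster, this is at most `k`.) -/
noncomputable def haltLevel {k : ℕ} {N : Fin k → ℕ} (C : Finset (Vertex k N))
    (u : Particle k N) : ℕ :=
  sInf {i | walkVertex u (i + 1) ∈ C}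

/-- One step of the DLA process: the state is the pair (occupied vertices, recorded
directed edges).  Once the source is occupied the process has finished and the
state no longer changes. -/
noncomputable def stepCluster {k : ℕ} {N : Fin k → ℕ}
    (s : Finset (Vertex k N) × Finset (Vertex k N × Vertex k N)) (u : Particle k N) :
    Finset (Vertex k N) × Finset (Vertex k N × Vertex k N) :=
  if Vertex.source ∈ s.1 then s
  else
    (insert (walkVertex u (haltLevel s.1 u)) s.1,
     insert (walkVertex u (haltLevel s.1 u), walkVertex u (haltLevel s.1 u + 1)) s.2)

/-- The cluster (occupied vertices, recorded edges) after `t` steps, driven by the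
sequence of particles `ω`.  Initially only the sink is occupied. -/
noncomputable def clusterAt {k : ℕ} {N : Fin k → ℕ} (ω : ℕ → Particle k N) :
    ℕ → Finset (Vertex k N) × Finset (Vertex k N × Vertex k N)
  | 0 => ({Vertex.sink}, ∅)
  | t + 1 => stepCluster (clusterAt ω t) (ω t)

/-- The finish time: the first step at which the source is occupied. -/
noncomputable def finishTime {k : ℕ} {N : Fin k → ℕ} (ω : ℕ → Particle k N) : ℕ :=
  sInf {t | Vertex.source ∈ (clusterAt ω t).1}

/-- The level of a vertex: source is `0`, layer `i+1` for `mid i x`, sink is `k+1`. -/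
def levelOf {k : ℕ} {N : Fin k → ℕ} : Vertex k N → ℕ
  | Vertex.source => 0
  | Vertex.sink => k + 1
  | Vertex.mid i _ => (i : ℕ) + 1

/-- `L_i(t)`: the number of occupied vertices at level `i` after `t` steps. -/
noncomputable def levelCount {k : ℕ} {N : Fin k → ℕ} (ω : ℕ → Particle k N) (i t : ℕ) : ℕ :=
  ((clusterAt ω t).1.filter fun w => levelOf w = i).card

/-- The probability of an event `E` of the DLA process: the particles are
independent and uniform.  Since the process finishes (and freezes) after at most
`1 + ∑ i, N i` steps, it suffices to sample that many particles uniformly;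
subsequent particles are irrelevant to the process. -/
noncomputable def prob (k : ℕ) (N : Fin k → ℕ) (E : (ℕ → Particle k N) → Prop) : ℝ :=
  ((Finset.univ.filter fun f : Fin (1 + ∑ i, N i) → Particle k N =>
      E fun t => f ⟨t % (1 + ∑ i, N i), Nat.mod_lt _ (by omega)⟩).card : ℝ) /
    (Fintype.card (Fin (1 + ∑ i, N i) → Particle k N) : ℝ)

end LayeredDLA

open LayeredDLA

namespace LayeredDLA

/-- `N_j` as a real number, for a level `1 ≤ j ≤ k`; by convention `N_0 = N_{k+1} = 1`. -/
def Nlevel {k : ℕ} (N : Fin k → ℕ) (j : ℕ) : ℝ :=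
  if h : 1 ≤ j ∧ j ≤ k then (N ⟨j - 1, by omega⟩ : ℝ) else 1

/-- The product `N_k · N_{k−1} ⋯ N_{k−j+1}` (an empty product for `j = 0`). -/
def Nprod {k : ℕ} (N : Fin k → ℕ) (j : ℕ) : ℝ :=
  ∏ l ∈ Finset.range j, Nlevel N (k - l)

/-- `μ_{k−j}(t) = t^(j+1) / ((j+1)! · N_k N_{k−1} ⋯ N_{k−j+1})`. -/
noncomputable def mu {k : ℕ} (N : Fin k → ℕ) (j t : ℕ) : ℝ :=
  (t : ℝ) ^ (j + 1) / ((Nat.factorial (j + 1) : ℝ) * Nprod N j)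

end LayeredDLA

namespace LayeredDLA

/-- Add a blocked vertex to a level of the upper-blocked process: add `x` if it is
not yet blocked, and otherwise some other unblocked vertex (here the least one),
if any exists. -/
def addBlocked {n : ℕ} (B : Finset (Fin n)) (x : Fin n) : Finset (Fin n) :=
  if x ∈ B then (if h : Bᶜ.Nonempty then insert (Bᶜ.min' h) B else B) else insert x B

/-- Whether the walk vertex of the particle `u` at level `j` is blocked in the
upper-blocked state `B` (the sink, at level `k+1`, is always blocked). -/
def upTest {k : ℕ} {N : Fin k → ℕ} (B : ∀ i : Fin k, Finset (Fin (N i)))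
    (u : Particle k N) (j : ℕ) : Prop :=
  if h : 1 ≤ j ∧ j ≤ k then
    have hj : j - 1 < k := by omega
    u ⟨j - 1, hj⟩ ∈ B ⟨j - 1, hj⟩
  else True

/-- One step of the upper-blocked process: the state is a pair (is the source
blocked, blocked vertices of each layer).  For every level `j = 0, …, k`, if the
walk vertex of the particle at level `j+1` is blocked, then level `j` gains a
blocked vertex. -/
noncomputable def stepUpper {k : ℕ} {N : Fin k → ℕ}
    (s : Bool × ∀ i : Fin k, Finset (Fin (N i))) (u : Particle k N) :
    Bool × ∀ i : Fin k, Finset (Fin (N i)) :=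
  ((if upTest s.2 u 1 then true else s.1),
   fun i => if upTest s.2 u ((i : ℕ) + 2) then addBlocked (s.2 i) (u i) else s.2 i)

/-- The upper-blocked process after `t` steps, coupled to the DLA process by being
driven by the same particle sequence `ω`. -/
noncomputable def upperAt {k : ℕ} {N : Fin k → ℕ} (ω : ℕ → Particle k N) :
    ℕ → Bool × ∀ i : Fin k, Finset (Fin (N i))
  | 0 => (false, fun _ => ∅)
  | t + 1 => stepUpper (upperAt ω t) (ω t)

/-- `L̂_i(t)`: the number of blocked vertices at level `i` after `t` steps of the
upper-blocked process (with the conventions `L̂_0 ∈ {0,1}` and `L̂_{k+1} = 1`). -/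
noncomputable def upCount {k : ℕ} {N : Fin k → ℕ} (ω : ℕ → Particle k N) (i t : ℕ) : ℕ :=
  if h : 1 ≤ i ∧ i ≤ k then ((upperAt ω t).2 ⟨i - 1, by omega⟩).card
  else if i = 0 then (if (upperAt ω t).1 then 1 else 0) else 1

end LayeredDLA

namespace LayeredDLA

variable {k : ℕ} {N : Fin k → ℕ}

lemma subset_addBlocked {n : ℕ} (B : Finset (Fin n)) (x : Fin n) : B ⊆ addBlocked B x := by
  unfold addBlocked
  split_ifs <;> first | exact Finset.subset_insert _ _ | exact Finset.Subset.refl _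

lemma mem_addBlocked {n : ℕ} (B : Finset (Fin n)) (x : Fin n) : x ∈ addBlocked B x := by
  unfold addBlocked
  split_ifs with h1 h2
  · exact Finset.mem_insert_of_mem h1
  · exact h1
  · exact Finset.mem_insert_self _ _

lemma card_addBlocked {n : ℕ} (B : Finset (Fin n)) (x : Fin n) (h : B.card < n) :
    (addBlocked B x).card = B.card + 1 := by
  unfold addBlocked
  have hne : Bᶜ.Nonempty := by
    rw [← Finset.card_pos, Finset.card_compl, Fintype.card_fin]
    omega
  by_cases h1 : x ∈ B
  · rw [if_pos h1, dif_pos hne, Finset.card_insert_of_notMem]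
    have := Finset.min'_mem Bᶜ hne
    simpa using this
  · rw [if_neg h1, Finset.card_insert_of_notMem h1]

lemma stepUpper_fst_mono (s : Bool × ∀ i : Fin k, Finset (Fin (N i))) (u : Particle k N)
    (h : s.1 = true) : (stepUpper s u).1 = true := by
  unfold stepUpper
  split_ifs <;> simp [h]

lemma stepUpper_snd_mono (s : Bool × ∀ i : Fin k, Finset (Fin (N i))) (u : Particle k N)
    (i : Fin k) : s.2 i ⊆ (stepUpper s u).2 i := by
  unfold stepUpper
  dsimp only
  split_ifs
  · exact subset_addBlocked _ _
  · exact Finset.Subset.refl _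

lemma sink_mem_cluster (ω : ℕ → Particle k N) (t : ℕ) :
    Vertex.sink ∈ (clusterAt ω t).1 := by
  induction t with
  | zero => simp [clusterAt]
  | succ t ih =>
    rw [clusterAt, stepCluster]
    split_ifs
    · exact ih
    · exact Finset.mem_insert_of_mem ih

lemma walkVertex_top (u : Particle k N) : walkVertex u (k + 1) = Vertex.sink := by
  unfold walkVertex
  rw [dif_neg (by omega)]
  rw [if_neg (by omega)]

lemma coupling (ω : ℕ → Particle k N) (t : ℕ) :
    (Vertex.source ∈ (clusterAt ω t).1 → (upperAt ω t).1 = true) ∧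
      (∀ (i : Fin k) (x : Fin (N i)),
        Vertex.mid i x ∈ (clusterAt ω t).1 → x ∈ (upperAt ω t).2 i) := by
  induction t with
  | zero =>
    constructor
    · intro h; simp [clusterAt] at h
    · intro i x h; simp [clusterAt] at h
  | succ t ih =>
    obtain ⟨ih1, ih2⟩ := ih
    rw [clusterAt, upperAt]
    by_cases hsrc : Vertex.source ∈ (clusterAt ω t).1
    · rw [stepCluster, if_pos hsrc]
      exact ⟨fun _ => stepUpper_fst_mono _ _ (ih1 hsrc),
        fun i x hx => stepUpper_snd_mono _ _ _ (ih2 i x hx)⟩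
    · rw [stepCluster, if_neg hsrc]
      set u := ω t with hu
      set C := (clusterAt ω t).1 with hC
      have hkmem : k ∈ {i | walkVertex u (i + 1) ∈ C} := by
        simp only [Set.mem_setOf_eq, walkVertex_top]
        exact sink_mem_cluster ω t
      have hne : {i | walkVertex u (i + 1) ∈ C}.Nonempty := ⟨k, hkmem⟩
      have hmem : walkVertex u (haltLevel C u + 1) ∈ C := Nat.sInf_mem hne
      have hmk : haltLevel C u ≤ k := Nat.sInf_le hkmem
      set m := haltLevel C u with hm
      have hT : upTest (upperAt ω t).2 u (m + 1) := by
        unfold upTest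
        split
        case isTrue h =>
          have hv : walkVertex u (m + 1) =
              Vertex.mid ⟨m + 1 - 1, by omega⟩ (u ⟨m + 1 - 1, by omega⟩) := by
            unfold walkVertex
            rw [dif_pos h]
          rw [hv] at hmem
          exact ih2 _ _ hmem
        case isFalse h => trivial
      by_cases hm0 : m = 0
      · have hw : walkVertex u m = Vertex.source := by
          unfold walkVertex
          rw [dif_neg (by omega), if_pos hm0]
        rw [hw]
        constructor
        · intro _
          rw [hm0] at hT
          unfold stepUpper
          rw [if_pos hT]
        · intro i x hx
          rcases Finset.mem_insert.1 hx with h | h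
          · exact absurd h (by simp)
          · exact stepUpper_snd_mono _ _ _ (ih2 i x h)
      · have hm1 : 1 ≤ m := by omega
        have hw : walkVertex u m = Vertex.mid ⟨m - 1, by omega⟩ (u ⟨m - 1, by omega⟩) := by
          unfold walkVertex
          rw [dif_pos ⟨hm1, hmk⟩]
        rw [hw]
        constructor
        · intro hx
          rcases Finset.mem_insert.1 hx with h | h
          · exact absurd h (by simp)
          · exact absurd h hsrc
        · intro i x hx
          rcases Finset.mem_insert.1 hx with h | h
          · rw [Vertex.mid.injEq] at h
            obtain ⟨hi, hx'⟩ := h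
            subst hi
            have hx'' : x = u ⟨m - 1, by omega⟩ := eq_of_heq hx'
            rw [hx'']
            unfold stepUpper
            dsimp only
            have hidx : ((⟨m - 1, by omega⟩ : Fin k) : ℕ) + 2 = m + 1 := by
              simp; omega
            rw [hidx, if_pos hT]
            exact mem_addBlocked _ _
          · exact stepUpper_snd_mono _ _ _ (ih2 i x h)

lemma upperAt_congr (ω ω' : ℕ → Particle k N) (t : ℕ) (h : ∀ s < t, ω s = ω' s) :
    upperAt ω t = upperAt ω' t := by
  induction t with
  | zero => rfl
  | succ t ih =>
    rw [upperAt, upperAt, ih (fun s hs => h s (by omega)), h t (by omega)]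

lemma sum_eval (N : Fin k → ℕ) (i' : Fin k) (f : Fin (N i') → ℝ) :
    (N i' : ℝ) * ∑ u : Particle k N, f (u i') =
      (Fintype.card (Particle k N) : ℝ) * ∑ x, f x := by
  classical
  let e := Equiv.piSplitAt i' (fun j => Fin (N j))
  have h1 : ∑ u : Particle k N, f (u i') =
      ∑ p : Fin (N i') × (∀ j : { j // j ≠ i' }, Fin (N (j : Fin k))), f p.1 := by
    exact Fintype.sum_equiv e (fun u => f (u i')) (fun p => f p.1) (fun u => rfl)
  have h2 : ∑ p : Fin (N i') × (∀ j : { j // j ≠ i' }, Fin (N (j : Fin k))), f p.1 =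
      (Fintype.card (∀ j : { j // j ≠ i' }, Fin (N (j : Fin k))) : ℝ) * ∑ x, f x := by
    rw [Fintype.sum_prod_type]
    simp only [Finset.sum_const, Finset.card_univ, nsmul_eq_mul]
    rw [Finset.mul_sum]
  have h3 : (Fintype.card (Particle k N) : ℝ) =
      (N i' : ℝ) * (Fintype.card (∀ j : { j // j ≠ i' }, Fin (N (j : Fin k))) : ℝ) := by
    rw [Fintype.card_congr e, Fintype.card_prod, Fintype.card_fin]
    push_cast
    ring
  rw [h1, h2, h3]
  ring

end LayeredDLA
namespace LayeredDLA

variable {k : ℕ} {N : Fin k → ℕ}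

lemma upTest_top (hk : 1 ≤ k) (B : ∀ i : Fin k, Finset (Fin (N i))) (u : Particle k N) :
    upTest B u (k + 1) := by
  unfold upTest
  rw [dif_neg (by omega)]
  trivial

lemma upCount_top (hk : 1 ≤ k) (ω : ℕ → Particle k N) (t : ℕ)
    (ht : t ≤ N ⟨k - 1, Nat.sub_lt hk Nat.one_pos⟩) : upCount ω k t = t := by
  induction t with
  | zero =>
    unfold upCount
    rw [dif_pos ⟨hk, le_refl k⟩]
    simp [upperAt]
  | succ t ih =>
    have ih' := ih (by omega)
    unfold upCount at ih' ⊢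
    rw [dif_pos ⟨hk, le_refl k⟩] at ih' ⊢
    rw [upperAt]
    have hstep : (stepUpper (upperAt ω t) (ω t)).2 ⟨k - 1, by omega⟩ =
        if upTest (upperAt ω t).2 (ω t) (((⟨k - 1, by omega⟩ : Fin k) : ℕ) + 2) then
          addBlocked ((upperAt ω t).2 ⟨k - 1, by omega⟩) (ω t ⟨k - 1, by omega⟩)
        else (upperAt ω t).2 ⟨k - 1, by omega⟩ := rfl
    have hidx : ((⟨k - 1, by omega⟩ : Fin k) : ℕ) + 2 = k + 1 := by
      simp only []
      omega
    rw [hstep, hidx, if_pos (upTest_top hk _ _), card_addBlocked _ _ (by rw [ih']; omega), ih']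

lemma levelCount_le (hk : 1 ≤ k) (ω : ℕ → Particle k N) (t i : ℕ) (hi : i ≤ k) :
    levelCount ω i t ≤ upCount ω i t := by
  obtain ⟨h1, h2⟩ := coupling ω t
  unfold levelCount upCount
  by_cases hi1 : 1 ≤ i
  · rw [dif_pos ⟨hi1, hi⟩]
    have hsub : (clusterAt ω t).1.filter (fun w => levelOf w = i) ⊆
        ((upperAt ω t).2 ⟨i - 1, by omega⟩).image
          (fun x => Vertex.mid ⟨i - 1, by omega⟩ x) := by
      intro w hw
      rw [Finset.mem_filter] at hw
      obtain ⟨hwC, hwl⟩ := hw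
      cases w with
      | source => simp [levelOf] at hwl; omega
      | sink => simp [levelOf] at hwl; omega
      | mid j x =>
        obtain ⟨jv, hjv⟩ := j
        have hji : jv = i - 1 := by simp [levelOf] at hwl; omega
        subst hji
        exact Finset.mem_image_of_mem _ (h2 _ _ hwC)
    exact le_trans (Finset.card_le_card hsub) Finset.card_image_le
  · have hi0 : i = 0 := by omega
    subst hi0
    rw [dif_neg (by omega), if_pos rfl]
    by_cases hf : (upperAt ω t).1 = true
    · rw [if_pos hf]
      have hsub : (clusterAt ω t).1.filter (fun w => levelOf w = 0) ⊆ {Vertex.source} := by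
        intro w hw
        rw [Finset.mem_filter] at hw
        obtain ⟨hwC, hwl⟩ := hw
        cases w with
        | source => simp
        | sink => simp [levelOf] at hwl
        | mid j x => simp [levelOf] at hwl
      simpa using Finset.card_le_card hsub
    · rw [if_neg hf]
      have hempty : (clusterAt ω t).1.filter (fun w => levelOf w = 0) = ∅ := by
        rw [Finset.eq_empty_iff_forall_notMem]
        intro w hw
        rw [Finset.mem_filter] at hw
        obtain ⟨hwC, hwl⟩ := hw
        cases w with
        | source => exact hf (h1 hwC)
        | sink => simp [levelOf] at hwl
        | mid j x => simp [levelOf] at hwl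
      simp [hempty]

lemma particle_nonempty (hN : ∀ j, 0 < N j) : Nonempty (Particle k N) :=
  ⟨fun j => ⟨0, hN j⟩⟩

lemma cardP_pos (hN : ∀ j, 0 < N j) : (0 : ℝ) < (Fintype.card (Particle k N) : ℝ) := by
  have := particle_nonempty hN
  exact_mod_cast Fintype.card_pos

lemma avg_const (hN : ∀ j, 0 < N j) (c : ℝ) :
    (∑ _u : Particle k N, c) / (Fintype.card (Particle k N) : ℝ) = c := by
  rw [Finset.sum_const, Finset.card_univ, nsmul_eq_mul]
  exact mul_div_cancel_left₀ c (ne_of_gt (cardP_pos hN))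

lemma avg_indicator (hN : ∀ j, 0 < N j) (i' : Fin k) (S : Finset (Fin (N i'))) (c : ℝ) :
    (∑ u : Particle k N, (c + if u i' ∈ S then (1 : ℝ) else 0)) /
      (Fintype.card (Particle k N) : ℝ) = c + (S.card : ℝ) / (N i' : ℝ) := by
  have hP := cardP_pos (N := N) hN
  have hNi : (0 : ℝ) < (N i' : ℝ) := by exact_mod_cast hN i'
  have hkey := sum_eval N i' (fun x => if x ∈ S then (1 : ℝ) else 0)
  have hs : (∑ x : Fin (N i'), if x ∈ S then (1 : ℝ) else 0) = S.card := by
    simp [Finset.sum_ite_mem]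
  rw [hs] at hkey
  have h2 : (∑ u : Particle k N, if u i' ∈ S then (1 : ℝ) else 0) /
      (Fintype.card (Particle k N) : ℝ) = (S.card : ℝ) / (N i' : ℝ) := by
    rw [div_eq_div_iff (ne_of_gt hP) (ne_of_gt hNi)]
    linarith [hkey]
  rw [Finset.sum_add_distrib, Finset.sum_const, Finset.card_univ, nsmul_eq_mul, add_div, h2,
    mul_div_cancel_left₀ c (ne_of_gt hP)]

end LayeredDLA

/-- For the layered DLA process coupled with its upper-blocked
process: (i) for all `i` and `t`, `B_i(t) ⊆ B̂_i(t)` (at every level, including the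
source level), hence `L_i(t) ≤ L̂_i(t)`, and `L̂_k(t) = t` (as long as layer `k` is
not exhausted); (ii) on the event that `L̂_j(t) < N_j` for every `j`, the conditional
expectation given the history `Ĥ(t)` (the average over the particle used at step
`t+1`, all previous particles being fixed) satisfies
`E(L̂_i(t+1) | Ĥ(t)) = L̂_i(t) + L̂_{i+1}(t)/N_{i+1}` for every `0 ≤ i ≤ k`, where
`L̂_{k+1}(t) = 1` and `N_{k+1} = 1`. -/
theorem upper_blocked_process_properties
    (k : ℕ) (N : Fin k → ℕ) (hk : 1 ≤ k) (hN : ∀ i, 0 < N i) :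
    (∀ (ω : ℕ → Particle k N) (t : ℕ),
      ((Vertex.source ∈ (clusterAt ω t).1 → (upperAt ω t).1 = true) ∧
        (∀ (i : Fin k) (x : Fin (N i)),
          Vertex.mid i x ∈ (clusterAt ω t).1 → x ∈ (upperAt ω t).2 i)) ∧
      (∀ i ≤ k, levelCount ω i t ≤ upCount ω i t) ∧
      (t ≤ N ⟨k - 1, by omega⟩ → upCount ω k t = t)) ∧
    (∀ (ω : ℕ → Particle k N) (t : ℕ),
      (∀ j ≤ k, (upCount ω j t : ℝ) < Nlevel N j) →
      ∀ i ≤ k,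
        (∑ u : Particle k N, (upCount (Function.update ω t u) i (t + 1) : ℝ)) /
            (Fintype.card (Particle k N) : ℝ) =
          (upCount ω i t : ℝ) + (upCount ω (i + 1) t : ℝ) / Nlevel N (i + 1)) := by
  constructor
  · intro ω t
    exact ⟨coupling ω t, fun i hi => levelCount_le hk ω t i hi,
      fun ht => upCount_top hk ω t ht⟩
  · intro ω t hlt i hik
    have hω' : ∀ u : Particle k N,
        upperAt (Function.update ω t u) (t + 1) = stepUpper (upperAt ω t) u := by
      intro u
      rw [upperAt]
      rw [upperAt_congr (Function.update ω t u) ω t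
        (fun s hs => Function.update_of_ne (by omega) _ _), Function.update_self]
    by_cases hi1 : 1 ≤ i
    · have hip : i - 1 < k := by omega
      have hcard : ((upperAt ω t).2 ⟨i - 1, hip⟩).card < N ⟨i - 1, hip⟩ := by
        have h := hlt i hik
        unfold upCount Nlevel at h
        rw [dif_pos ⟨hi1, hik⟩, dif_pos ⟨hi1, hik⟩] at h
        exact_mod_cast h
      have hucount : upCount ω i t = ((upperAt ω t).2 ⟨i - 1, hip⟩).card := by
        unfold upCount; rw [dif_pos ⟨hi1, hik⟩]
      have key : ∀ u : Particle k N, (upCount (Function.update ω t u) i (t + 1) : ℝ) =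
          (((upperAt ω t).2 ⟨i - 1, hip⟩).card : ℝ) +
            (if upTest (upperAt ω t).2 u (i + 1) then (1 : ℝ) else 0) := by
        intro u
        unfold upCount
        rw [dif_pos ⟨hi1, hik⟩, hω' u]
        have hstep : (stepUpper (upperAt ω t) u).2 ⟨i - 1, hip⟩ =
            if upTest (upperAt ω t).2 u (((⟨i - 1, hip⟩ : Fin k) : ℕ) + 2) then
              addBlocked ((upperAt ω t).2 ⟨i - 1, hip⟩) (u ⟨i - 1, hip⟩)
            else (upperAt ω t).2 ⟨i - 1, hip⟩ := rfl
        have hidx : ((⟨i - 1, hip⟩ : Fin k) : ℕ) + 2 = i + 1 := by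
          simp only []
          omega
        rw [hstep, hidx]
        by_cases hT : upTest (upperAt ω t).2 u (i + 1)
        · rw [if_pos hT, if_pos hT, card_addBlocked _ _ hcard]
          push_cast
          ring
        · rw [if_neg hT, if_neg hT]
          simp
      by_cases hikk : i = k
      · have hTt : ∀ u : Particle k N, upTest (upperAt ω t).2 u (i + 1) := by
          intro u
          rw [hikk]
          exact upTest_top hk _ u
        have hsum : ∑ u : Particle k N, (upCount (Function.update ω t u) i (t + 1) : ℝ) =
            ∑ _u : Particle k N, ((((upperAt ω t).2 ⟨i - 1, hip⟩).card : ℝ) + 1) :=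
          Finset.sum_congr rfl fun u _ => by
            rw [key u, if_pos (hTt u)]
        rw [hsum, avg_const hN, hucount]
        have h1 : upCount ω (i + 1) t = 1 := by
          unfold upCount; rw [dif_neg (by omega), if_neg (by omega)]
        
        have h2 : Nlevel N (i + 1) = 1 := by
          unfold Nlevel; rw [dif_neg (by omega)]
        rw [h1, h2]
        norm_num
      · have hik' : i < k := by omega
        have hTiff : ∀ u : Particle k N, upTest (upperAt ω t).2 u (i + 1) ↔
            u ⟨i, hik'⟩ ∈ (upperAt ω t).2 ⟨i, hik'⟩ := by
          intro u
          unfold upTest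
          rw [dif_pos (show 1 ≤ i + 1 ∧ i + 1 ≤ k by omega)]
          exact Iff.rfl
        have hsum : ∑ u : Particle k N, (upCount (Function.update ω t u) i (t + 1) : ℝ) =
            ∑ u : Particle k N, ((((upperAt ω t).2 ⟨i - 1, hip⟩).card : ℝ) +
              if u ⟨i, hik'⟩ ∈ (upperAt ω t).2 ⟨i, hik'⟩ then (1 : ℝ) else 0) :=
          Finset.sum_congr rfl fun u _ => by
            rw [key u]
            by_cases hm : u ⟨i, hik'⟩ ∈ (upperAt ω t).2 ⟨i, hik'⟩
            · rw [if_pos ((hTiff u).2 hm), if_pos hm]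
            · rw [if_neg (fun hT => hm ((hTiff u).1 hT)), if_neg hm]
        rw [hsum, avg_indicator hN _ _ _, hucount]
        have h1 : upCount ω (i + 1) t = ((upperAt ω t).2 ⟨i, hik'⟩).card := by
          unfold upCount
          rw [dif_pos (show 1 ≤ i + 1 ∧ i + 1 ≤ k by omega)]
          rfl
        have h2 : Nlevel N (i + 1) = (N ⟨i, hik'⟩ : ℝ) := by
          unfold Nlevel
          rw [dif_pos (show 1 ≤ i + 1 ∧ i + 1 ≤ k by omega)]
          rfl
        rw [h1, h2]
    · have hi0 : i = 0 := by omega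
      subst hi0
      have hf : (upperAt ω t).1 = false := by
        have h := hlt 0 (by omega)
        unfold upCount Nlevel at h
        rw [dif_neg (by omega), if_pos rfl, dif_neg (by omega)] at h
        by_contra hc
        rw [Bool.not_eq_false] at hc
        rw [if_pos hc] at h
        norm_num at h
      have h0 : upCount ω 0 t = 0 := by
        unfold upCount
        rw [dif_neg (by omega), if_pos rfl, hf]
        simp
      have hz : (0 : ℕ) < k := hk
      have key : ∀ u : Particle k N, (upCount (Function.update ω t u) 0 (t + 1) : ℝ) =
          0 + (if u ⟨0, hz⟩ ∈ (upperAt ω t).2 ⟨0, hz⟩ then (1 : ℝ) else 0) := by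
        intro u
        unfold upCount
        rw [dif_neg (by omega), if_pos rfl, hω' u]
        have hfst : (stepUpper (upperAt ω t) u).1 =
            if upTest (upperAt ω t).2 u 1 then true else (upperAt ω t).1 := rfl
        rw [hfst, hf]
        have hTiff : upTest (upperAt ω t).2 u 1 ↔
            u ⟨0, hz⟩ ∈ (upperAt ω t).2 ⟨0, hz⟩ := by
          unfold upTest
          rw [dif_pos (show 1 ≤ 1 ∧ 1 ≤ k by omega)]
        by_cases hm : u ⟨0, hz⟩ ∈ (upperAt ω t).2 ⟨0, hz⟩
        · rw [if_pos (hTiff.2 hm)]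
          simp [hm]
        · rw [if_neg (fun hT => hm (hTiff.1 hT))]
          simp [hm]
      have hsum : ∑ u : Particle k N, (upCount (Function.update ω t u) 0 (t + 1) : ℝ) =
          ∑ u : Particle k N, ((0 : ℝ) +
            if u ⟨0, hz⟩ ∈ (upperAt ω t).2 ⟨0, hz⟩ then (1 : ℝ) else 0) :=
        Finset.sum_congr rfl fun u _ => key u
      rw [hsum, avg_indicator hN _ _ _, h0]
      have h1 : upCount ω 1 t = ((upperAt ω t).2 ⟨0, hz⟩).card := by
        unfold upCount; rw [dif_pos ⟨le_refl 1, hk⟩]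
      have h2 : Nlevel N 1 = (N ⟨0, hz⟩ : ℝ) := by
        unfold Nlevel; rw [dif_pos ⟨le_refl 1, hk⟩]
      rw [h1, h2]
      norm_num
end

section
/- Let k ≥ 0 and let N_1, …, N_k be positive reals. Define a_i : ℕ → ℝ by a_k(t) = t and, for 0 ≤ i < k, a_i(t) = (1/N_{i+1}) · ∑_{s=0}^{t−1} a_{i+1}(s). Then for every 0 ≤ j ≤ k and every t ∈ ℕ: N_k · N_{k−1} ⋯ N_{k−j+1} · a_{k−j}(t) ≤ t^{j+1}/(j+1)!, and if t ≥ j then N_k · N_{k−1} ⋯ N_{k−j+1} · a_{k−j}(t) ≥ (t−j)^{j+1}/(j+1)!. -/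
lemma hockey_range (m : ℕ) : ∀ t : ℕ, ∑ s ∈ Finset.range t, Nat.choose s m = Nat.choose t (m + 1) := by
  intro t
  induction t with
  | zero => simp
  | succ t ih =>
    rw [Finset.sum_range_succ, ih, Nat.choose_succ_succ' t m]
    omega

/-- Let `k ≥ 0` and let `N_1, …, N_k` be positive reals.  Define
`a_i : ℕ → ℝ` by `a_k(t) = t` and, for `0 ≤ i < k`,
`a_i(t) = (1/N_{i+1}) · ∑_{s=0}^{t−1} a_{i+1}(s)` (these are the expected level
occupancies `E L̂_{k−j}(t)` of the upper-blocked process).  Then for every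
`0 ≤ j ≤ k` and every `t ∈ ℕ`:
`N_k · N_{k−1} ⋯ N_{k−j+1} · a_{k−j}(t) ≤ t^(j+1)/(j+1)!`, and if `t ≥ j` then
`N_k · N_{k−1} ⋯ N_{k−j+1} · a_{k−j}(t) ≥ (t−j)^(j+1)/(j+1)!`. -/
theorem expected_upper_occupancy_bounds
    (k : ℕ) (N : ℕ → ℝ) (hN : ∀ i, 1 ≤ i → i ≤ k → 0 < N i)
    (a : ℕ → ℕ → ℝ)
    (hak : ∀ t : ℕ, a k t = t)
    (ha : ∀ i < k, ∀ t : ℕ, a i t = (1 / N (i + 1)) * ∑ s ∈ Finset.range t, a (i + 1) s) :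
    ∀ j ≤ k, ∀ t : ℕ,
      (∏ l ∈ Finset.range j, N (k - l)) * a (k - j) t ≤
          (t : ℝ) ^ (j + 1) / (Nat.factorial (j + 1) : ℝ) ∧
      (j ≤ t →
        ((t : ℝ) - j) ^ (j + 1) / (Nat.factorial (j + 1) : ℝ) ≤
          (∏ l ∈ Finset.range j, N (k - l)) * a (k - j) t) := by
  have key : ∀ j ≤ k, ∀ t : ℕ,
      (∏ l ∈ Finset.range j, N (k - l)) * a (k - j) t = (Nat.choose t (j + 1) : ℝ) := by
    intro j
    induction j with
    | zero => intro _ t; simp [hak]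
    | succ j ih =>
      intro hjk t
      have hj : j ≤ k := by omega
      have h1 : k - (j + 1) < k := by omega
      have h2 : k - (j + 1) + 1 = k - j := by omega
      have hNpos : 0 < N (k - j) := hN _ (by omega) (by omega)
      rw [ha _ h1 t, h2, Finset.prod_range_succ]
      rw [show (∏ l ∈ Finset.range j, N (k - l)) * N (k - j) *
            ((1 / N (k - j)) * ∑ s ∈ Finset.range t, a (k - j) s)
          = (N (k - j) * (1 / N (k - j))) *
            ((∏ l ∈ Finset.range j, N (k - l)) * ∑ s ∈ Finset.range t, a (k - j) s) by ring,
        mul_one_div_cancel hNpos.ne', one_mul, Finset.mul_sum]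
      calc (∑ s ∈ Finset.range t, (∏ l ∈ Finset.range j, N (k - l)) * a (k - j) s)
          = ∑ s ∈ Finset.range t, (Nat.choose s (j + 1) : ℝ) := by
            exact Finset.sum_congr rfl fun s _ => ih hj s
        _ = (Nat.choose t (j + 2) : ℝ) := by
            rw [← Nat.cast_sum]
            exact_mod_cast congrArg (Nat.cast : ℕ → ℝ) (hockey_range (j + 1) t)
  intro j hj t
  rw [key j hj t]
  have hfac : (0 : ℝ) < (Nat.factorial (j + 1) : ℝ) := by
    exact_mod_cast Nat.factorial_pos (j + 1)
  constructor
  · rw [le_div_iff₀ hfac]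
    have h := Nat.descFactorial_le_pow t (j + 1)
    have h2 := Nat.descFactorial_eq_factorial_mul_choose t (j + 1)
    have : (Nat.factorial (j + 1)) * (Nat.choose t (j + 1)) ≤ t ^ (j + 1) := by omega
    calc (Nat.choose t (j + 1) : ℝ) * (Nat.factorial (j + 1) : ℝ)
        = ((Nat.factorial (j + 1) * Nat.choose t (j + 1) : ℕ) : ℝ) := by push_cast; ring
      _ ≤ (t : ℝ) ^ (j + 1) := by exact_mod_cast this
  · intro hjt
    rw [div_le_iff₀ hfac]
    have h := Nat.pow_sub_le_descFactorial t (j + 1)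
    have h2 := Nat.descFactorial_eq_factorial_mul_choose t (j + 1)
    have h3 : t + 1 - (j + 1) = t - j := by omega
    rw [h3] at h
    have hnat : (t - j) ^ (j + 1) ≤ Nat.factorial (j + 1) * Nat.choose t (j + 1) := by omega
    have hcast : ((t : ℝ) - j) = ((t - j : ℕ) : ℝ) := by
      rw [Nat.cast_sub hjt]
    rw [hcast]
    calc (((t - j : ℕ) : ℝ)) ^ (j + 1) = (((t - j) ^ (j + 1) : ℕ) : ℝ) := by push_cast; ring
      _ ≤ ((Nat.factorial (j + 1) * Nat.choose t (j + 1) : ℕ) : ℝ) := by exact_mod_cast hnat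
      _ = (Nat.choose t (j + 1) : ℝ) * (Nat.factorial (j + 1) : ℝ) := by push_cast; ring
end
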